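/- Let N be a natural number and p, λ real numbers with 1 < p < N and λ > 0. Let r_* > 1 and C₂ > 0. Let φ, g : ℝ → ℝ with φ differentiable on (r_*,∞), g continuous and nonnegative on [1,∞), 0 ≤ φ(s) ≤ C₂·s^(−(N−p)/(p−1)) for all s ≥ r_*, and suppose A := (∫_1^∞ s^(N−1)·g(s)^(N/p) ds)^(p/N) is finite. If for every r > r_* one has r^(N−1)·|φ'(r)|^(p−1) = λ·∫_{r_*}^{r} s^(N−1)·g(s)·φ(s)^(p−1) ds, then for every r > r_*: |φ'(r)| ≤ (λ·C₂^(p−1)·A)^(1/(p−1)) · (log r)^((N−p)/(N(p−1))) · r^(−(N−1)/(p−1)). -/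

import Mathlib

open Real Set MeasureTheory intervalIntegral

/-- Far-field gradient upper bound of Theorem 1.3(b), with logarithmic
correction coming from the `L^{N/p}` structure of the weight. -/
theorem farfield_gradient_upper (N : ℕ) (p lam : ℝ)
    (hp : 1 < p) (hpN : p < N) (hlam : 0 < lam)
    (rstar : ℝ) (hrstar : 1 < rstar) (C₂ : ℝ) (hC₂ : 0 < C₂)
    (φ g : ℝ → ℝ)
    (hφdiff : ∀ r > rstar, DifferentiableAt ℝ φ r)
    (hgcont : ContinuousOn g (Set.Ici 1))
    (hgnonneg : ∀ s ≥ (1 : ℝ), 0 ≤ g s)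
    (hφbound : ∀ s ≥ rstar, 0 ≤ φ s ∧ φ s ≤ C₂ * s ^ (-((N : ℝ) - p) / (p - 1)))
    (hA : IntegrableOn (fun s : ℝ => s ^ ((N : ℝ) - 1) * g s ^ ((N : ℝ) / p)) (Set.Ioi 1))
    (hidentity : ∀ r > rstar,
      r ^ ((N : ℝ) - 1) * |deriv φ r| ^ (p - 1) =
        lam * ∫ s in rstar..r, s ^ ((N : ℝ) - 1) * g s * φ s ^ (p - 1)) :
    ∀ r > rstar,
      |deriv φ r| ≤
        (lam * C₂ ^ (p - 1) *
            (∫ s in Set.Ioi (1 : ℝ), s ^ ((N : ℝ) - 1) * g s ^ ((N : ℝ) / p)) ^ (p / (N : ℝ)))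
          ^ (1 / (p - 1)) *
          Real.log r ^ (((N : ℝ) - p) / ((N : ℝ) * (p - 1))) *
          r ^ (-((N : ℝ) - 1) / (p - 1)) := by
  intro r hr
  have hn1 : (1:ℝ) < (N:ℝ) := hp.trans hpN
  have hn0 : (0:ℝ) < (N:ℝ) := by linarith
  have hp0 : (0:ℝ) < p := by linarith
  have hp1 : (0:ℝ) < p - 1 := by linarith
  have hnp : (0:ℝ) < (N:ℝ) - p := by linarith
  have hrs0 : (0:ℝ) < rstar := by linarith
  have hr1 : (1:ℝ) < r := hrstar.trans hr
  have hr0 : (0:ℝ) < r := by linarith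
  have hlogr : 0 < Real.log r := Real.log_pos hr1
  have hIoc_pos : ∀ s ∈ Ioc rstar r, (1:ℝ) < s := fun s hs => hrstar.trans hs.1
  have hφcont : ContinuousOn φ (Ioi rstar) := fun s hs =>
    ((hφdiff s hs).continuousAt).continuousWithinAt
  -- pointwise bound
  have hptbound : ∀ s ∈ Ioc rstar r,
      s ^ ((N:ℝ) - 1) * g s * φ s ^ (p - 1) ≤ C₂ ^ (p - 1) * (s ^ (p - 1) * g s) := by
    intro s hs
    have hs1 : (1:ℝ) < s := hIoc_pos s hs
    have hs0 : (0:ℝ) < s := by linarith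
    obtain ⟨hφ0, hφle⟩ := hφbound s hs.1.le
    have h1 : φ s ^ (p - 1) ≤ (C₂ * s ^ (-((N:ℝ) - p) / (p - 1))) ^ (p - 1) :=
      Real.rpow_le_rpow hφ0 hφle hp1.le
    have h2 : (C₂ * s ^ (-((N:ℝ) - p) / (p - 1))) ^ (p - 1)
        = C₂ ^ (p - 1) * s ^ (-((N:ℝ) - p)) := by
      rw [Real.mul_rpow hC₂.le (Real.rpow_nonneg hs0.le _), ← Real.rpow_mul hs0.le]
      congr 1
      field_simp
    have h3 : s ^ ((N:ℝ) - 1) * g s * (C₂ ^ (p - 1) * s ^ (-((N:ℝ) - p)))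
        = C₂ ^ (p - 1) * (s ^ (p - 1) * g s) := by
      have key : s ^ ((N:ℝ) - 1) * s ^ (-((N:ℝ) - p)) = s ^ (p - 1) := by
        rw [← Real.rpow_add hs0]; congr 1; ring
      calc s ^ ((N:ℝ) - 1) * g s * (C₂ ^ (p - 1) * s ^ (-((N:ℝ) - p)))
          = C₂ ^ (p - 1) * ((s ^ ((N:ℝ) - 1) * s ^ (-((N:ℝ) - p))) * g s) := by ring
        _ = C₂ ^ (p - 1) * (s ^ (p - 1) * g s) := by rw [key]
    calc s ^ ((N:ℝ) - 1) * g s * φ s ^ (p - 1)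
        ≤ s ^ ((N:ℝ) - 1) * g s * (C₂ ^ (p - 1) * s ^ (-((N:ℝ) - p))) := by
          apply mul_le_mul_of_nonneg_left (h1.trans_eq h2)
          exact mul_nonneg (Real.rpow_nonneg hs0.le _) (hgnonneg s hs1.le)
      _ = C₂ ^ (p - 1) * (s ^ (p - 1) * g s) := h3
  -- continuity infrastructure
  have hIoc_sub_Ici : Ioc rstar r ⊆ Ici (1:ℝ) := fun s hs => (hIoc_pos s hs).le
  have hIcc_sub_Ici : Icc rstar r ⊆ Ici (1:ℝ) := fun s hs => (hrstar.trans_le hs.1).le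
  have hrpow_cont : ∀ (e : ℝ), ContinuousOn (fun s : ℝ => s ^ e) (Icc rstar r) := by
    intro e s hs
    exact (Real.continuousAt_rpow_const s e
      (Or.inl (ne_of_gt (lt_of_lt_of_le hrs0 hs.1)))).continuousWithinAt
  -- integrability of the majorant k
  have hkcont : ContinuousOn (fun s : ℝ => s ^ (p-1) * g s) (Icc rstar r) :=
    (hrpow_cont (p-1)).mul (hgcont.mono hIcc_sub_Ici)
  have hkint : IntegrableOn (fun s : ℝ => s ^ (p-1) * g s) (Ioc rstar r) :=
    (hkcont.integrableOn_Icc).mono_set Ioc_subset_Icc_self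
  have hkint' : IntegrableOn (fun s : ℝ => C₂ ^ (p-1) * (s ^ (p-1) * g s)) (Ioc rstar r) :=
    hkint.const_mul _
  -- integrability of h
  have hhcont : ContinuousOn (fun s : ℝ => s ^ ((N:ℝ)-1) * g s * φ s ^ (p-1)) (Ioc rstar r) := by
    refine ContinuousOn.mul (ContinuousOn.mul ?_ (hgcont.mono hIoc_sub_Ici)) ?_
    · exact (hrpow_cont _).mono Ioc_subset_Icc_self
    · exact (hφcont.mono (fun s hs => hs.1)).rpow_const (fun s hs => Or.inr hp1.le)
  have hhnonneg : ∀ s ∈ Ioc rstar r, 0 ≤ s ^ ((N:ℝ)-1) * g s * φ s ^ (p-1) := by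
    intro s hs
    have hs1 := hIoc_pos s hs
    exact mul_nonneg (mul_nonneg (Real.rpow_nonneg (by linarith) _) (hgnonneg s hs1.le))
      (Real.rpow_nonneg (hφbound s hs.1.le).1 _)
  have hhint : IntegrableOn (fun s : ℝ => s ^ ((N:ℝ)-1) * g s * φ s ^ (p-1)) (Ioc rstar r) := by
    refine Integrable.mono' hkint' (hhcont.aestronglyMeasurable measurableSet_Ioc) ?_
    rw [ae_restrict_iff' measurableSet_Ioc]
    refine ae_of_all _ fun s hs => ?_
    rw [Real.norm_of_nonneg (hhnonneg s hs)]
    exact hptbound s hs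
  -- step 1: bound the interval integral
  have hstep1 : (∫ s in rstar..r, s ^ ((N:ℝ)-1) * g s * φ s ^ (p-1))
      ≤ C₂ ^ (p-1) * ∫ s in Ioc rstar r, s ^ (p-1) * g s := by
    rw [intervalIntegral.integral_of_le hr.le, ← MeasureTheory.integral_const_mul]
    exact setIntegral_mono_on hhint hkint' measurableSet_Ioc hptbound
  -- Hölder setup
  set F : ℝ → ℝ := fun s => s ^ (((N:ℝ)-1) * p / (N:ℝ)) * g s with hF
  set G : ℝ → ℝ := fun s => s ^ (-((N:ℝ)-p) / (N:ℝ)) with hG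
  have hconj : ((N:ℝ)/p).HolderConjugate ((N:ℝ)/((N:ℝ)-p)) := by
    rw [Real.holderConjugate_iff]; constructor
    · rw [lt_div_iff₀ hp0]; linarith
    · rw [inv_div, inv_div, ← add_div, add_sub_cancel, div_self hn0.ne']
  have hFcont : ContinuousOn F (Icc rstar r) :=
    (hrpow_cont _).mul (hgcont.mono hIcc_sub_Ici)
  have hGcont : ContinuousOn G (Icc rstar r) := hrpow_cont _
  obtain ⟨CF, hCF⟩ := (isCompact_Icc (a := rstar) (b := r)).exists_bound_of_continuousOn hFcont
  obtain ⟨CG, hCG⟩ := (isCompact_Icc (a := rstar) (b := r)).exists_bound_of_continuousOn hGcont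
  have hFmeas : AEStronglyMeasurable F (volume.restrict (Ioc rstar r)) :=
    (hFcont.mono Ioc_subset_Icc_self).aestronglyMeasurable measurableSet_Ioc
  have hGmeas : AEStronglyMeasurable G (volume.restrict (Ioc rstar r)) :=
    (hGcont.mono Ioc_subset_Icc_self).aestronglyMeasurable measurableSet_Ioc
  have hFmem : MemLp F (ENNReal.ofReal ((N:ℝ)/p)) (volume.restrict (Ioc rstar r)) := by
    refine MemLp.of_bound hFmeas CF ?_
    exact (ae_restrict_iff' measurableSet_Ioc).2
      (ae_of_all _ fun s hs => hCF s (Ioc_subset_Icc_self hs))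
  have hGmem : MemLp G (ENNReal.ofReal ((N:ℝ)/((N:ℝ)-p))) (volume.restrict (Ioc rstar r)) := by
    refine MemLp.of_bound hGmeas CG ?_
    exact (ae_restrict_iff' measurableSet_Ioc).2
      (ae_of_all _ fun s hs => hCG s (Ioc_subset_Icc_self hs))
  have hF0 : 0 ≤ᵐ[volume.restrict (Ioc rstar r)] F := by
    refine (ae_restrict_iff' measurableSet_Ioc).2 (ae_of_all _ fun s hs => ?_)
    have hs1 := hIoc_pos s hs
    exact mul_nonneg (Real.rpow_nonneg (by linarith) _) (hgnonneg s hs1.le)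
  have hG0 : 0 ≤ᵐ[volume.restrict (Ioc rstar r)] G := by
    refine (ae_restrict_iff' measurableSet_Ioc).2 (ae_of_all _ fun s hs => ?_)
    have hs1 := hIoc_pos s hs
    exact Real.rpow_nonneg (by linarith) _
  have hHolder := MeasureTheory.integral_mul_le_Lp_mul_Lq_of_nonneg hconj hF0 hG0 hFmem hGmem
  rw [one_div_div, one_div_div] at hHolder
  -- identify ∫ F*G with J
  have hFG : (∫ s in Ioc rstar r, F s * G s) = ∫ s in Ioc rstar r, s ^ (p-1) * g s := by
    refine setIntegral_congr_fun measurableSet_Ioc fun s hs => ?_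
    have hs1 := hIoc_pos s hs
    have hs0 : (0:ℝ) < s := by linarith
    show s ^ (((N:ℝ)-1) * p / (N:ℝ)) * g s * s ^ (-((N:ℝ)-p) / (N:ℝ)) = s ^ (p-1) * g s
    have key : s ^ (((N:ℝ)-1) * p / (N:ℝ)) * s ^ (-((N:ℝ)-p) / (N:ℝ)) = s ^ (p-1) := by
      rw [← Real.rpow_add hs0]; congr 1; field_simp; ring
    calc s ^ (((N:ℝ)-1) * p / (N:ℝ)) * g s * s ^ (-((N:ℝ)-p) / (N:ℝ))
        = (s ^ (((N:ℝ)-1) * p / (N:ℝ)) * s ^ (-((N:ℝ)-p) / (N:ℝ))) * g s := by ring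
      _ = s ^ (p-1) * g s := by rw [key]
  -- identify ∫ F^{N/p}
  have hFpow : (∫ s in Ioc rstar r, F s ^ ((N:ℝ)/p))
      = ∫ s in Ioc rstar r, s ^ ((N:ℝ)-1) * g s ^ ((N:ℝ)/p) := by
    refine setIntegral_congr_fun measurableSet_Ioc fun s hs => ?_
    have hs1 := hIoc_pos s hs
    have hs0 : (0:ℝ) < s := by linarith
    show (s ^ (((N:ℝ)-1) * p / (N:ℝ)) * g s) ^ ((N:ℝ)/p) = s ^ ((N:ℝ)-1) * g s ^ ((N:ℝ)/p)
    rw [Real.mul_rpow (Real.rpow_nonneg hs0.le _) (hgnonneg s hs1.le),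
      ← Real.rpow_mul hs0.le]
    congr 2
    field_simp
  -- identify ∫ G^{N/(N-p)}
  have hGpow : (∫ s in Ioc rstar r, G s ^ ((N:ℝ)/((N:ℝ)-p)))
      = Real.log r - Real.log rstar := by
    have h1 : (∫ s in Ioc rstar r, G s ^ ((N:ℝ)/((N:ℝ)-p))) = ∫ s in Ioc rstar r, s⁻¹ := by
      refine setIntegral_congr_fun measurableSet_Ioc fun s hs => ?_
      have hs1 := hIoc_pos s hs
      have hs0 : (0:ℝ) < s := by linarith
      show (s ^ (-((N:ℝ)-p) / (N:ℝ))) ^ ((N:ℝ)/((N:ℝ)-p)) = s⁻¹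
      rw [← Real.rpow_mul hs0.le]
      have : -((N:ℝ)-p) / (N:ℝ) * ((N:ℝ)/((N:ℝ)-p)) = -1 := by field_simp
      rw [this, Real.rpow_neg_one]
    rw [h1, ← intervalIntegral.integral_of_le hr.le,
      integral_inv_of_pos hrs0 hr0, Real.log_div (by linarith) (by linarith)]
  -- bound ∫F^ by A and ∫G^ by log r
  have hAnonneg : 0 ≤ ∫ s in Ioi (1:ℝ), s ^ ((N:ℝ)-1) * g s ^ ((N:ℝ)/p) := by
    refine setIntegral_nonneg measurableSet_Ioi fun s hs => ?_
    have : (1:ℝ) < s := hs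
    exact mul_nonneg (Real.rpow_nonneg (by linarith) _)
      (Real.rpow_nonneg (hgnonneg s this.le) _)
  have hFle : (∫ s in Ioc rstar r, s ^ ((N:ℝ)-1) * g s ^ ((N:ℝ)/p))
      ≤ ∫ s in Ioi (1:ℝ), s ^ ((N:ℝ)-1) * g s ^ ((N:ℝ)/p) := by
    refine setIntegral_mono_set hA ?_ ?_
    · refine (ae_restrict_iff' measurableSet_Ioi).2 (ae_of_all _ fun s hs => ?_)
      have : (1:ℝ) < s := hs
      exact mul_nonneg (Real.rpow_nonneg (by linarith) _)
        (Real.rpow_nonneg (hgnonneg s this.le) _)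
    · exact HasSubset.Subset.eventuallyLE fun s hs => hIoc_pos s hs
  have hFint_nonneg : 0 ≤ ∫ s in Ioc rstar r, s ^ ((N:ℝ)-1) * g s ^ ((N:ℝ)/p) := by
    refine setIntegral_nonneg measurableSet_Ioc fun s hs => ?_
    have hs1 := hIoc_pos s hs
    exact mul_nonneg (Real.rpow_nonneg (by linarith) _)
      (Real.rpow_nonneg (hgnonneg s hs1.le) _)
  have hlogsub : 0 ≤ Real.log r - Real.log rstar := by
    have := Real.log_le_log hrs0 hr.le
    linarith
  -- step 2 : Hölder bound on J
  have hstep2 : (∫ s in Ioc rstar r, s ^ (p-1) * g s)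
      ≤ (∫ s in Ioi (1:ℝ), s ^ ((N:ℝ)-1) * g s ^ ((N:ℝ)/p)) ^ (p/(N:ℝ))
        * Real.log r ^ (((N:ℝ)-p)/(N:ℝ)) := by
    rw [← hFG]
    refine hHolder.trans ?_
    rw [hFpow, hGpow]
    refine mul_le_mul ?_ ?_ (Real.rpow_nonneg hlogsub _) (Real.rpow_nonneg hAnonneg _)
    · exact Real.rpow_le_rpow hFint_nonneg hFle (by positivity)
    · refine Real.rpow_le_rpow hlogsub (by linarith [Real.log_nonneg hrstar.le]) (by positivity)
  -- assemble the bound on X^{p-1}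
  set A : ℝ := (∫ s in Ioi (1:ℝ), s ^ ((N:ℝ)-1) * g s ^ ((N:ℝ)/p)) ^ (p/(N:ℝ)) with hAdef
  have hA0 : 0 ≤ A := Real.rpow_nonneg hAnonneg _
  set B : ℝ := lam * C₂ ^ (p-1) * A with hBdef
  have hB0 : 0 ≤ B := by
    have : (0:ℝ) ≤ C₂ ^ (p-1) := Real.rpow_nonneg hC₂.le _
    positivity
  set X : ℝ := |deriv φ r| with hXdef
  have hrpow_pos : 0 < r ^ ((N:ℝ)-1) := Real.rpow_pos_of_pos hr0 _
  have hXeq : X ^ (p-1) = lam * (∫ s in rstar..r, s ^ ((N:ℝ)-1) * g s * φ s ^ (p-1))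
      / r ^ ((N:ℝ)-1) := by
    rw [eq_div_iff hrpow_pos.ne', mul_comm]
    exact hidentity r hr
  have hXbound : X ^ (p-1) ≤ B * Real.log r ^ (((N:ℝ)-p)/(N:ℝ)) * r ^ (-((N:ℝ)-1)) := by
    rw [hXeq, Real.rpow_neg hr0.le, ← div_eq_mul_inv]
    rw [div_le_div_iff_of_pos_right hrpow_pos]
    calc lam * (∫ s in rstar..r, s ^ ((N:ℝ)-1) * g s * φ s ^ (p-1))
        ≤ lam * (C₂ ^ (p-1) * ∫ s in Ioc rstar r, s ^ (p-1) * g s) :=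
          mul_le_mul_of_nonneg_left hstep1 hlam.le
      _ ≤ lam * (C₂ ^ (p-1) * (A * Real.log r ^ (((N:ℝ)-p)/(N:ℝ)))) := by
          refine mul_le_mul_of_nonneg_left (mul_le_mul_of_nonneg_left hstep2 ?_) hlam.le
          exact Real.rpow_nonneg hC₂.le _
      _ = B * Real.log r ^ (((N:ℝ)-p)/(N:ℝ)) := by rw [hBdef]; ring
  -- take the (p-1)-th root
  have hXval : X = (X ^ (p-1)) ^ (1/(p-1)) := by
    rw [← Real.rpow_mul (abs_nonneg _), mul_one_div, div_self hp1.ne', Real.rpow_one]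
  rw [hXval]
  calc (X ^ (p-1)) ^ (1/(p-1))
      ≤ (B * Real.log r ^ (((N:ℝ)-p)/(N:ℝ)) * r ^ (-((N:ℝ)-1))) ^ (1/(p-1)) :=
        Real.rpow_le_rpow (Real.rpow_nonneg (abs_nonneg _) _) hXbound (by positivity)
    _ = B ^ (1/(p-1)) * (Real.log r ^ (((N:ℝ)-p)/(N:ℝ))) ^ (1/(p-1))
        * (r ^ (-((N:ℝ)-1))) ^ (1/(p-1)) := by
        rw [Real.mul_rpow (mul_nonneg hB0 (Real.rpow_nonneg hlogr.le _))
          (Real.rpow_nonneg hr0.le _),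
          Real.mul_rpow hB0 (Real.rpow_nonneg hlogr.le _)]
    _ = B ^ (1/(p-1)) * Real.log r ^ (((N:ℝ)-p)/((N:ℝ)*(p-1)))
        * r ^ (-((N:ℝ)-1)/(p-1)) := by
        rw [← Real.rpow_mul hlogr.le, ← Real.rpow_mul hr0.le]
        congr 2
        · rw [div_mul_div_comm, mul_one]
        · rw [mul_one_div]
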